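/- (Theorem 1, fixed-point case, derivatives with respect to h.) Let (z_t)_{t\ge 1} be an orbit of F, i.e. z_{t+1} = F(z_t), and assume z_t converges to a fixed point z^* of F with z^*_i \ne 0 for all i, and that \|W_\Omega(z^*)\|_2 < 1. Fix m \in \{1,\dots,M\}, let e_m denote the m-th standard basis vector, and define the derivative sequence (H_t)_{t\ge 1} (which equals \partial z_t / \partial h_m) by H_1 = 0 and H_{t+1} = e_m + W_\Omega(z_t)\, H_t. Then \sup_t \|H_t\| < \infty, and moreover \limsup_{T\to\infty}\|H_T\| \le 1/(1 - \|W_\Omega(z^*)\|_2). -/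

import Mathlib

open Matrix Filter Topology

/-- The operator 2-norm (largest singular value) of a real matrix. -/
noncomputable def opNorm2 {m n : Type*} [Fintype m] [Fintype n] [DecidableEq n]
    (A : Matrix m n ℝ) : ℝ :=
  ‖LinearMap.toContinuousLinearMap (Matrix.toEuclideanLin (𝕜 := ℝ) A)‖

/-- Euclidean norm of a real vector. -/
noncomputable def vnorm {n : Type*} [Fintype n] (v : n → ℝ) : ℝ :=
  Real.sqrt (∑ i, v i ^ 2)

/-- Componentwise ReLU. -/
noncomputable def relu {n : Type*} (z : n → ℝ) : n → ℝ := fun i => max 0 (z i)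

/-- `Dmat z` is the diagonal 0–1 matrix with `(Dmat z) i i = 1` iff `z i > 0`. -/
noncomputable def Dmat {n : Type*} [Fintype n] [DecidableEq n] (z : n → ℝ) :
    Matrix n n ℝ :=
  Matrix.diagonal (fun i => if 0 < z i then (1 : ℝ) else 0)

/-- `W_Ω(z) = A + W D(z)`. -/
noncomputable def Wom {n : Type*} [Fintype n] [DecidableEq n]
    (A W : Matrix n n ℝ) (z : n → ℝ) : Matrix n n ℝ :=
  A + W * Dmat z

/-- The deterministic, input-free PLRNN map `F(z) = A z + W φ(z) + h`. -/
noncomputable def plrnn {n : Type*} [Fintype n] [DecidableEq n]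
    (A W : Matrix n n ℝ) (h : n → ℝ) (z : n → ℝ) : n → ℝ :=
  A.mulVec z + W.mulVec (relu z) + h


lemma vnorm_eq {n : Type*} [Fintype n] (v : n → ℝ) :
    vnorm v = ‖(WithLp.equiv 2 (n → ℝ)).symm v‖ := by
  simp [vnorm, EuclideanSpace.norm_eq, Real.norm_eq_abs, sq_abs]

lemma vnorm_nonneg {n : Type*} [Fintype n] (v : n → ℝ) : 0 ≤ vnorm v :=
  Real.sqrt_nonneg _

lemma vnorm_add_le {n : Type*} [Fintype n] (u v : n → ℝ) :
    vnorm (u + v) ≤ vnorm u + vnorm v := by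
  rw [vnorm_eq, vnorm_eq, vnorm_eq]
  exact norm_add_le ((WithLp.equiv 2 (n → ℝ)).symm u) ((WithLp.equiv 2 (n → ℝ)).symm v)

lemma vnorm_mulVec_le {n : Type*} [Fintype n] [DecidableEq n]
    (B : Matrix n n ℝ) (v : n → ℝ) :
    vnorm (B.mulVec v) ≤ opNorm2 B * vnorm v := by
  rw [vnorm_eq, vnorm_eq]
  exact (LinearMap.toContinuousLinearMap (Matrix.toEuclideanLin (𝕜 := ℝ) B)).le_opNorm ((WithLp.equiv 2 (n → ℝ)).symm v)

lemma vnorm_single {n : Type*} [Fintype n] [DecidableEq n] (m : n) :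
    vnorm (Pi.single m (1:ℝ)) = 1 := by
  simp [vnorm, Pi.single_apply, Finset.sum_ite_eq']

/-- Theorem 1, fixed-point case, derivatives w.r.t. `h`: along an orbit
converging to a stable fixed point `z*` with no zero component and `‖W_Ω(z*)‖₂ < 1`, the
derivative sequence `H` of the states w.r.t. the bias `h m` (satisfying `H 1 = 0` and
`H (t+1) = e_m + W_Ω(z t) H t`) is bounded, with
`limsup ‖H T‖ ≤ 1 / (1 - ‖W_Ω(z*)‖₂)`. -/
theorem gradients_wrt_h_bounded {M : ℕ} (A W : Matrix (Fin M) (Fin M) ℝ)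
    (hA : A.IsDiag) (hWd : ∀ i, W i i = 0) (h : Fin M → ℝ)
    (z : ℕ → Fin M → ℝ) (horb : ∀ t, 1 ≤ t → z (t + 1) = plrnn A W h (z t))
    (zstar : Fin M → ℝ) (hfix : plrnn A W h zstar = zstar)
    (hconv : Tendsto z atTop (𝓝 zstar)) (hnz : ∀ i, zstar i ≠ 0)
    (hnorm : opNorm2 (Wom A W zstar) < 1)
    (m : Fin M) (H : ℕ → Fin M → ℝ) (hH1 : H 1 = 0)
    (hHrec : ∀ t, 1 ≤ t →
      H (t + 1) = (Pi.single m 1 : Fin M → ℝ) + (Wom A W (z t)).mulVec (H t)) :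
    (∃ C : ℝ, ∀ t, vnorm (H t) ≤ C) ∧
      Filter.limsup (fun T => vnorm (H T)) atTop ≤ 1 / (1 - opNorm2 (Wom A W zstar)) := by
  classical
  set ρ := opNorm2 (Wom A W zstar) with hρ
  have hρ0 : 0 ≤ ρ := norm_nonneg _
  have h1ρ : 0 < 1 - ρ := by linarith
  -- eventually the matrix W_Ω(z t) equals W_Ω(z*)
  have hev : ∀ᶠ t in atTop, Wom A W (z t) = Wom A W zstar := by
    have hco : ∀ i, Tendsto (fun t => z t i) atTop (𝓝 (zstar i)) := by
      intro i; exact (tendsto_pi_nhds.1 hconv) i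
    have : ∀ᶠ t in atTop, ∀ i, (0 < z t i ↔ 0 < zstar i) := by
      rw [eventually_all]
      intro i
      rcases lt_or_gt_of_ne (hnz i) with hi | hi
      · filter_upwards [(hco i).eventually_lt_const hi] with t ht
        constructor <;> intro hh <;> linarith
      · filter_upwards [(hco i).eventually_const_lt hi] with t ht
        constructor <;> intro _ <;> linarith
    filter_upwards [this] with t ht
    have hD : (fun i => if 0 < z t i then (1:ℝ) else 0)
        = (fun i => if 0 < zstar i then (1:ℝ) else 0) :=
      funext fun i => if_congr (ht i) rfl rfl
    simp [Wom, Dmat, hD]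
  obtain ⟨N, hN⟩ := eventually_atTop.1 hev
  set T0 : ℕ := max N 1 with hT0
  have hT01 : 1 ≤ T0 := le_max_right _ _
  have hWt : ∀ t, T0 ≤ t → Wom A W (z t) = Wom A W zstar := fun t ht =>
    hN t (le_trans (le_max_left _ _) ht)
  set K : ℝ := vnorm (H T0) with hK
  have hK0 : 0 ≤ K := vnorm_nonneg _
  -- key estimate
  have key : ∀ k : ℕ, vnorm (H (T0 + k)) ≤ ρ ^ k * K + 1 / (1 - ρ) := by
    intro k
    induction k with
    | zero =>
      simp only [Nat.add_zero, pow_zero, one_mul]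
      have : 0 ≤ 1 / (1 - ρ) := by positivity
      linarith
    | succ k ih =>
      have ht : 1 ≤ T0 + k := le_trans hT01 (Nat.le_add_right _ _)
      have hrec := hHrec (T0 + k) ht
      rw [hWt (T0 + k) (Nat.le_add_right _ _)] at hrec
      have : vnorm (H (T0 + (k + 1))) ≤ 1 + ρ * vnorm (H (T0 + k)) := by
        rw [show T0 + (k + 1) = (T0 + k) + 1 from rfl, hrec]
        calc vnorm ((Pi.single m 1 : Fin M → ℝ) + (Wom A W zstar).mulVec (H (T0 + k)))
            ≤ vnorm (Pi.single m (1:ℝ)) + vnorm ((Wom A W zstar).mulVec (H (T0 + k))) :=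
              vnorm_add_le _ _
          _ ≤ 1 + ρ * vnorm (H (T0 + k)) := by
              rw [vnorm_single]
              exact add_le_add le_rfl (vnorm_mulVec_le _ _)
      have hmul : ρ * vnorm (H (T0 + k)) ≤ ρ * (ρ ^ k * K + 1 / (1 - ρ)) :=
        mul_le_mul_of_nonneg_left ih hρ0
      have hfield : 1 + ρ * (ρ ^ k * K + 1 / (1 - ρ)) = ρ ^ (k + 1) * K + 1 / (1 - ρ) := by
        field_simp; ring
      linarith
  constructor
  · -- boundedness
    have hne : (Finset.range (T0 + 1)).Nonempty := ⟨0, by simp⟩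
    refine ⟨max ((Finset.range (T0 + 1)).sup' hne (fun t => vnorm (H t))) (K + 1 / (1 - ρ)), ?_⟩
    intro t
    rcases le_or_gt t T0 with ht | ht
    · exact le_trans (Finset.le_sup' (fun t => vnorm (H t))
        (Finset.mem_range.2 (Nat.lt_succ_of_le ht))) (le_max_left _ _)
    · have : vnorm (H t) ≤ K + 1 / (1 - ρ) := by
        have hk := key (t - T0)
        rw [Nat.add_sub_cancel' ht.le] at hk
        have hpow : ρ ^ (t - T0) * K ≤ K := by
          have : ρ ^ (t - T0) ≤ 1 := pow_le_one₀ hρ0 (by linarith)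
          nlinarith
        linarith
      exact le_trans this (le_max_right _ _)
  · -- limsup bound
    have hg : Tendsto (fun T : ℕ => ρ ^ (T - T0) * K + 1 / (1 - ρ)) atTop
        (𝓝 (1 / (1 - ρ))) := by
      have h0 : Tendsto (fun T : ℕ => ρ ^ (T - T0) * K) atTop (𝓝 0) := by
        have hsub : Tendsto (fun T : ℕ => T - T0) atTop atTop :=
          tendsto_sub_atTop_nat T0
        have habs : |ρ| < 1 := by rw [abs_of_nonneg hρ0]; linarith
        have := (tendsto_pow_atTop_nhds_zero_of_abs_lt_one habs).comp hsub
        simpa using this.mul_const K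
      have := h0.add_const (1 / (1 - ρ))
      simpa using this
    have hle : (fun T => vnorm (H T)) ≤ᶠ[atTop]
        fun T : ℕ => ρ ^ (T - T0) * K + 1 / (1 - ρ) := by
      filter_upwards [eventually_ge_atTop T0] with T hT
      have hk := key (T - T0)
      rwa [Nat.add_sub_cancel' hT] at hk
    calc Filter.limsup (fun T => vnorm (H T)) atTop
        ≤ Filter.limsup (fun T : ℕ => ρ ^ (T - T0) * K + 1 / (1 - ρ)) atTop := by
          refine Filter.limsup_le_limsup hle ?_ ?_
          · exact IsCoboundedUnder.of_frequently_ge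
              (Frequently.of_forall (fun T => vnorm_nonneg (H T)))
          · exact hg.isBoundedUnder_le
      _ = 1 / (1 - ρ) := hg.limsup_eq
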